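/- Let g : [0, δ] → ℝ be concave with g(0) = 0, and let 0 = v⁰ ≤ v¹ ≤ ... ≤ v^k = δ. Suppose nonnegative reals w¹, ..., w^k satisfy Σ_{j<i} wʲ ≤ v^{i−1} and wⁱ ≤ vⁱ − v^{i−1} for each i. Then Σ_{i=1}^k [g(v^{i−1} + wⁱ) − g(v^{i−1})] ≤ g(Σ_{i=1}^k wⁱ). -/

import Mathlib

lemma concave_incr_le (g : ℝ → ℝ) (δ : ℝ)
    (hconc : ConcaveOn ℝ (Set.Icc 0 δ) g)
    (a b t : ℝ) (ha : 0 ≤ a) (hab : a ≤ b) (ht : 0 ≤ t) (hbt : b + t ≤ δ) :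
    g (b + t) - g b ≤ g (a + t) - g a := by
  rcases eq_or_lt_of_le ht with h | ht
  · simp [← h]
  rcases eq_or_lt_of_le hab with h | hab
  · simp [h]
  have hb : 0 ≤ b := le_trans ha hab.le
  have hx1 : a ∈ Set.Icc 0 δ := ⟨ha, by linarith⟩
  have hx4 : b + t ∈ Set.Icc 0 δ := ⟨by linarith, hbt⟩
  set μ : ℝ := (b - a) / (b - a + t) with hμdef
  have hd : (0:ℝ) < b - a + t := by linarith
  have hμ0 : 0 ≤ μ := div_nonneg (by linarith) hd.le
  have hμ1 : μ ≤ 1 := (div_le_one hd).2 (by linarith)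
  have h1 : (1 - μ) • a + μ • (b + t) = b := by
    have hm : μ * (b - a + t) = b - a := div_mul_cancel₀ _ hd.ne'
    simp only [smul_eq_mul]; linear_combination hm
  have h2 : μ • a + (1 - μ) • (b + t) = a + t := by
    have hm : μ * (b - a + t) = b - a := div_mul_cancel₀ _ hd.ne'
    simp only [smul_eq_mul]; linear_combination (-1 : ℝ) * hm
  have c1 := hconc.2 hx1 hx4 (show (0:ℝ) ≤ 1 - μ by linarith) hμ0 (show (1-μ)+μ = 1 by ring)
  have c2 := hconc.2 hx1 hx4 hμ0 (show (0:ℝ) ≤ 1 - μ by linarith) (show μ+(1-μ) = 1 by ring)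
  rw [h1] at c1
  rw [h2] at c2
  simp only [smul_eq_mul] at c1 c2
  linarith

theorem stmt_7 (g : ℝ → ℝ) (δ : ℝ) (k : ℕ) (v w : ℕ → ℝ)
    (hδ : 0 ≤ δ)
    (hconc : ConcaveOn ℝ (Set.Icc 0 δ) g)
    (hg0 : g 0 = 0)
    (hv0 : v 0 = 0) (hvk : v k = δ)
    (hvmono : ∀ i ∈ Finset.Icc 1 k, v (i - 1) ≤ v i)
    (hw : ∀ i ∈ Finset.Icc 1 k, 0 ≤ w i)
    (hwsum : ∀ i ∈ Finset.Icc 1 k, (∑ j ∈ Finset.Icc 1 (i - 1), w j) ≤ v (i - 1))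
    (hwrate : ∀ i ∈ Finset.Icc 1 k, w i ≤ v i - v (i - 1)) :
    (∑ i ∈ Finset.Icc 1 k, (g (v (i - 1) + w i) - g (v (i - 1)))) ≤
      g (∑ i ∈ Finset.Icc 1 k, w i) := by
  -- v is monotone up to k
  have hvle : ∀ i, i ≤ k → v i ≤ δ := by
    intro i hik
    rw [← hvk]
    have : ∀ j, i ≤ j → j ≤ k → v i ≤ v j := by
      intro j hij
      induction j, hij using Nat.le_induction with
      | base => intro _; exact le_refl _
      | succ n hn ih =>
        intro hnk
        have h1 : v i ≤ v n := ih (by omega)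
        have h2 : v ((n+1) - 1) ≤ v (n+1) :=
          hvmono (n+1) (Finset.mem_Icc.2 ⟨by omega, hnk⟩)
        simpa using h1.trans h2
    exact this k hik le_rfl
  -- main induction
  have main : ∀ m, m ≤ k →
      (∑ i ∈ Finset.Icc 1 m, (g (v (i - 1) + w i) - g (v (i - 1)))) ≤
        g (∑ i ∈ Finset.Icc 1 m, w i) := by
    intro m
    induction m with
    | zero => intro _; simp [hg0]
    | succ n ih =>
      intro hnk
      have hnk' : n ≤ k := by omega
      have hmem : n + 1 ∈ Finset.Icc 1 k := Finset.mem_Icc.2 ⟨by omega, hnk⟩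
      have hS0 : 0 ≤ ∑ i ∈ Finset.Icc 1 n, w i :=
        Finset.sum_nonneg fun i hi => hw i (Finset.mem_Icc.2 ⟨(Finset.mem_Icc.1 hi).1, by
          have := (Finset.mem_Icc.1 hi).2; omega⟩)
      have hSv : (∑ i ∈ Finset.Icc 1 n, w i) ≤ v n := by
        have := hwsum (n+1) hmem
        simpa using this
      have hbt : v n + w (n+1) ≤ δ := by
        have h1 := hwrate (n+1) hmem
        have h2 := hvle (n+1) hnk
        simp only [Nat.add_sub_cancel] at h1
        linarith
      have hkey : g (v n + w (n+1)) - g (v n) ≤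
          g ((∑ i ∈ Finset.Icc 1 n, w i) + w (n+1)) - g (∑ i ∈ Finset.Icc 1 n, w i) :=
        concave_incr_le g δ hconc _ _ _ hS0 hSv (hw (n+1) hmem) hbt
      rw [Finset.sum_Icc_succ_top (by omega : 1 ≤ n + 1),
          Finset.sum_Icc_succ_top (by omega : 1 ≤ n + 1)]
      have := ih hnk'
      simp only [Nat.add_sub_cancel]
      linarith
  exact main k le_rfl
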